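/- arXiv:1003.2725 — 4 statements merged into one kernel-verified Lean document; each statement's English description precedes it below -/
import Mathlib

section
/- Let n be a finite index type. The squaring map q(A) = A * A, restricted to the set S = {A : Matrix n n ℂ | A is positive semidefinite}, is a homeomorphism of S onto itself: q maps S bijectively onto S, q is continuous, and its inverse (the positive semidefinite square root map A ↦ √A) is continuous with respect to the subspace topology on S. -/
open scoped ComplexOrder Matrix
open Matrix

lemma isClosed_posSemidef {n : Type*} [Fintype n] :
    IsClosed {A : Matrix n n ℂ | A.PosSemidef} := by
  have h1 : IsClosed {A : Matrix n n ℂ | A.IsHermitian} :=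
    isClosed_eq continuous_id.matrix_conjTranspose continuous_id
  have h2 : IsClosed {A : Matrix n n ℂ | ∀ x : n → ℂ, 0 ≤ star x ⬝ᵥ A.mulVec x} := by
    rw [Set.setOf_forall]
    refine isClosed_iInter fun x => ?_
    have hc : Continuous fun A : Matrix n n ℂ => star x ⬝ᵥ A.mulVec x :=
      (continuous_const).dotProduct (continuous_id.matrix_mulVec continuous_const)
    have : {A : Matrix n n ℂ | 0 ≤ star x ⬝ᵥ A.mulVec x}
        = (fun A : Matrix n n ℂ => star x ⬝ᵥ A.mulVec x) ⁻¹' {z : ℂ | 0 ≤ z} := rfl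
    rw [this]
    refine IsClosed.preimage hc ?_
    have : {z : ℂ | 0 ≤ z} = {z : ℂ | 0 ≤ z.re} ∩ {z : ℂ | z.im = 0} := by
      ext z; simp [Complex.le_def, eq_comm]
    rw [this]
    exact (isClosed_le continuous_const Complex.continuous_re).inter
      (isClosed_eq Complex.continuous_im continuous_const)
  have : {A : Matrix n n ℂ | A.PosSemidef} =
      {A : Matrix n n ℂ | A.IsHermitian} ∩ {A | ∀ x, 0 ≤ star x ⬝ᵥ A.mulVec x} := by
    ext A; exact Matrix.posSemidef_iff_dotProduct_mulVec
  rw [this]; exact h1.inter h2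

lemma entry_sq_le {n : Type*} [Fintype n] {A : Matrix n n ℂ} (hA : A.PosSemidef)
    (i j : n) : ‖A i j‖ ^ 2 ≤ ((A * A) j j).re := by
  have h : (A * A) j j = ∑ k, (Complex.normSq (A k j) : ℂ) := by
    rw [Matrix.mul_apply]
    refine Finset.sum_congr rfl fun k _ => ?_
    rw [← hA.1.apply k j, Complex.normSq_eq_conj_mul_self]
    simp [Complex.star_def, mul_comm]
  rw [h]
  push_cast [Complex.re_sum]
  have : ‖A i j‖ ^ 2 = Complex.normSq (A i j) := by
    rw [← Complex.sq_norm]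
  rw [this]
  exact Finset.single_le_sum (f := fun k => Complex.normSq (A k j))
    (fun k _ => Complex.normSq_nonneg _) (Finset.mem_univ i)

section main
variable {n : Type*} [Fintype n] [DecidableEq n]

abbrev S (n : Type*) [Fintype n] := {A : Matrix n n ℂ // A.PosSemidef}

lemma sq_mem_posSemidef (A : (S n)) : ((A : Matrix n n ℂ) * A).PosSemidef := by
  rw [← pow_two]; exact A.2.pow 2

section sqrtAux
open scoped MatrixOrder

lemma psd_sqrt_eq (A : Matrix n n ℂ) (hA : A.PosSemidef) :
    CFC.sqrt A = (hA.1.eigenvectorUnitary : Matrix n n ℂ) *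
      Matrix.diagonal ((↑) ∘ Real.sqrt ∘ hA.1.eigenvalues : n → ℂ) *
      (star hA.1.eigenvectorUnitary : Matrix n n ℂ) := by
  rw [CFC.sqrt_eq_real_sqrt A hA.nonneg, cfcₙ_eq_cfc, hA.1.cfc_eq]; rfl

lemma psd_sqrt_posSemidef (A : Matrix n n ℂ) (hA : A.PosSemidef) :
    ((hA.1.eigenvectorUnitary : Matrix n n ℂ) *
      Matrix.diagonal ((↑) ∘ Real.sqrt ∘ hA.1.eigenvalues : n → ℂ) *
      (star hA.1.eigenvectorUnitary : Matrix n n ℂ)).PosSemidef := by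
  rw [← psd_sqrt_eq A hA]; exact (CFC.sqrt_nonneg A).posSemidef

lemma psd_sqrt_mul_self (A : Matrix n n ℂ) (hA : A.PosSemidef) :
    ((hA.1.eigenvectorUnitary : Matrix n n ℂ) *
      Matrix.diagonal ((↑) ∘ Real.sqrt ∘ hA.1.eigenvalues : n → ℂ) *
      (star hA.1.eigenvectorUnitary : Matrix n n ℂ)) *
    ((hA.1.eigenvectorUnitary : Matrix n n ℂ) *
      Matrix.diagonal ((↑) ∘ Real.sqrt ∘ hA.1.eigenvalues : n → ℂ) *
      (star hA.1.eigenvectorUnitary : Matrix n n ℂ)) = A := by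
  rw [← psd_sqrt_eq A hA]; exact CFC.sqrt_mul_sqrt_self A hA.nonneg

lemma psd_sqrt_of_sq (B : Matrix n n ℂ) (hB : B.PosSemidef) (hBB : (B * B).PosSemidef) :
    (hBB.1.eigenvectorUnitary : Matrix n n ℂ) *
      Matrix.diagonal ((↑) ∘ Real.sqrt ∘ hBB.1.eigenvalues : n → ℂ) *
      (star hBB.1.eigenvectorUnitary : Matrix n n ℂ) = B := by
  rw [← psd_sqrt_eq _ hBB]; exact CFC.sqrt_mul_self B hB.nonneg

end sqrtAux

noncomputable def sqEquiv : (S n) ≃ (S n) where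
  toFun A := ⟨(A : Matrix n n ℂ) * A, sq_mem_posSemidef A⟩
  invFun A := ⟨(A.2.1.eigenvectorUnitary : Matrix n n ℂ) *
    Matrix.diagonal ((↑) ∘ Real.sqrt ∘ A.2.1.eigenvalues : n → ℂ) *
    (star A.2.1.eigenvectorUnitary : Matrix n n ℂ), psd_sqrt_posSemidef A.1 A.2⟩
  left_inv A := by
    ext : 1
    exact psd_sqrt_of_sq A.1 A.2 (sq_mem_posSemidef A)
  right_inv A := by
    ext : 1
    exact psd_sqrt_mul_self A.1 A.2

lemma continuous_sqEquiv : Continuous (sqEquiv : (S n) → (S n)) :=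
  Continuous.subtype_mk (continuous_subtype_val.matrix_mul continuous_subtype_val) _

lemma isCompact_preimage_sqEquiv {K : Set (S n)} (hK : IsCompact K) :
    IsCompact ((sqEquiv : (S n) → (S n)) ⁻¹' K) := by
  rw [Subtype.isCompact_iff]
  -- the image of K in matrix space
  set Km : Set (Matrix n n ℂ) := Subtype.val '' K with hKm
  have hKmc : IsCompact Km := hK.image continuous_subtype_val
  -- a uniform bound on entries of elements of Km
  have hub : ∀ i j : n, ∃ r : ℝ, ∀ C ∈ Km, ‖C i j‖ ≤ r := fun i j =>
    hKmc.exists_bound_of_continuousOn (continuous_id.matrix_elem i j).continuousOn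
  choose rf hrf using hub
  set r : ℝ := ∑ i : n, ∑ j : n, |rf i j| with hrdef
  have hentry : ∀ C ∈ Km, ∀ i j : n, ‖C i j‖ ≤ r := by
    intro C hC i j
    refine le_trans (hrf i j C hC) (le_trans (le_abs_self _) ?_)
    rw [hrdef]
    calc |rf i j| ≤ ∑ j' : n, |rf i j'| :=
          Finset.single_le_sum (f := fun j' => |rf i j'|)
            (fun k _ => abs_nonneg _) (Finset.mem_univ j)
      _ ≤ ∑ i' : n, ∑ j' : n, |rf i' j'| :=
          Finset.single_le_sum (f := fun i' => ∑ j' : n, |rf i' j'|)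
            (fun k _ => Finset.sum_nonneg fun _ _ => abs_nonneg _) (Finset.mem_univ i)
  -- description of the image of the preimage
  have himg : Subtype.val '' ((sqEquiv : (S n) → (S n)) ⁻¹' K)
      = {B : Matrix n n ℂ | B.PosSemidef} ∩ {B | B * B ∈ Km} := by
    ext B
    constructor
    · rintro ⟨A, hA, rfl⟩
      exact ⟨A.2, ⟨sqEquiv A, hA, rfl⟩⟩
    · rintro ⟨hB, C, hC, hBC⟩
      refine ⟨⟨B, hB⟩, ?_, rfl⟩
      have : sqEquiv ⟨B, hB⟩ = C := Subtype.ext hBC.symm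
      exact Set.mem_preimage.mpr (this ▸ hC)
  rw [himg]
  -- closed
  have hclosed : IsClosed ({B : Matrix n n ℂ | B.PosSemidef} ∩ {B | B * B ∈ Km}) :=
    isClosed_posSemidef.inter (hKmc.isClosed.preimage
      (continuous_id.matrix_mul continuous_id))
  -- contained in a compact box
  have hbox : IsCompact ((Set.univ.pi fun _ : n => Set.univ.pi fun _ : n =>
      Metric.closedBall (0 : ℂ) (Real.sqrt r)) : Set (Matrix n n ℂ)) :=
    isCompact_univ_pi fun _ => isCompact_univ_pi fun _ => isCompact_closedBall 0 _
  refine hbox.of_isClosed_subset hclosed ?_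
  rintro B ⟨hB, hBsq⟩
  intro i _
  intro j _
  rw [Metric.mem_closedBall, dist_zero_right]
  have h1 := entry_sq_le hB i j
  have h3 := hentry _ hBsq j j
  have : ‖B i j‖ ^ 2 ≤ r := le_trans h1 (le_trans (Complex.re_le_norm _) h3)
  calc ‖B i j‖ = Real.sqrt (‖B i j‖ ^ 2) := by rw [Real.sqrt_sq (norm_nonneg _)]
    _ ≤ Real.sqrt r := Real.sqrt_le_sqrt this


lemma isProperMap_sqEquiv : IsProperMap (sqEquiv : (S n) → (S n)) :=
  haveI : FirstCountableTopology (Matrix n n ℂ) :=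
    (inferInstance : FirstCountableTopology (n → n → ℂ))
  isProperMap_iff_isCompact_preimage.mpr
    ⟨continuous_sqEquiv, fun _ hK => isCompact_preimage_sqEquiv hK⟩

noncomputable def sqHomeomorph : (S n) ≃ₜ (S n) where
  toEquiv := sqEquiv
  continuous_toFun := continuous_sqEquiv
  continuous_invFun := by
    rw [continuous_iff_isClosed]
    intro C hC
    rw [Equiv.invFun_as_coe]
    have : (sqEquiv.symm : (S n) → (S n)) ⁻¹' C = (sqEquiv : (S n) → (S n)) '' C := by
      rw [Equiv.image_eq_preimage_symm]
    rw [this]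
    exact (isProperMap_sqEquiv).isClosedMap C hC

end main

/-- The squaring map `A ↦ A * A` on the set of positive semidefinite complex
matrices is a homeomorphism of this set onto itself, whose inverse is the
positive semidefinite square root map. -/
theorem squaring_homeomorph_posSemidef
    {n : Type*} [Fintype n] [DecidableEq n] :
    ∃ q : {A : Matrix n n ℂ // A.PosSemidef} ≃ₜ {A : Matrix n n ℂ // A.PosSemidef},
      (∀ A : {A : Matrix n n ℂ // A.PosSemidef},
        (q A : Matrix n n ℂ) = (A : Matrix n n ℂ) * (A : Matrix n n ℂ)) ∧
      (∀ A : {A : Matrix n n ℂ // A.PosSemidef},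
        (q.symm A : Matrix n n ℂ) = (A.2.1.eigenvectorUnitary : Matrix n n ℂ) *
          Matrix.diagonal ((↑) ∘ Real.sqrt ∘ A.2.1.eigenvalues : n → ℂ) *
          (star A.2.1.eigenvectorUnitary : Matrix n n ℂ)) := by
  exact ⟨sqHomeomorph, fun A => rfl, fun A => rfl⟩
end

section
/- Let n be a finite nonempty index type. The set T = {A : Matrix n n ℂ | A is positive semidefinite and trace A = 1} is closed in Matrix n n ℂ, and T equals the closure of the set {A : Matrix n n ℂ | A is positive definite and trace A = 1}. In particular, the positive definite matrices of trace 1 are dense in the positive semidefinite matrices of trace 1. -/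
open scoped ComplexOrder

open Matrix Filter Topology

private lemma smul_posSemidef {n : Type*} [Fintype n] {c : ℝ} (hc : 0 ≤ c)
    {A : Matrix n n ℂ} (hA : A.PosSemidef) : (c • A).PosSemidef := by
  rw [posSemidef_iff_dotProduct_mulVec]
  refine ⟨?_, fun x => ?_⟩
  · unfold Matrix.IsHermitian
    rw [conjTranspose_smul, star_trivial, hA.1]
  · rw [smul_mulVec, dotProduct_smul, RCLike.real_smul_eq_coe_mul]
    exact mul_nonneg (Complex.zero_le_real.mpr hc) ((posSemidef_iff_dotProduct_mulVec.mp hA).2 x)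

private lemma smul_posDef {n : Type*} [Fintype n] {c : ℝ} (hc : 0 < c)
    {A : Matrix n n ℂ} (hA : A.PosDef) : (c • A).PosDef := by
  rw [posDef_iff_dotProduct_mulVec]
  refine ⟨?_, fun x hx => ?_⟩
  · unfold Matrix.IsHermitian
    rw [conjTranspose_smul, star_trivial, hA.1]
  · rw [smul_mulVec, dotProduct_smul, RCLike.real_smul_eq_coe_mul]
    exact mul_pos (Complex.zero_lt_real.mpr hc) ((posDef_iff_dotProduct_mulVec.mp hA).2 hx)

/-- The set of positive semidefinite complex matrices of trace 1 is closed and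
coincides with the closure of the set of positive definite matrices of trace 1. -/
theorem posSemidef_traceOne_eq_closure_posDef_traceOne
    {n : Type*} [Fintype n] [DecidableEq n] [Nonempty n] :
    IsClosed {A : Matrix n n ℂ | A.PosSemidef ∧ A.trace = 1} ∧
    {A : Matrix n n ℂ | A.PosSemidef ∧ A.trace = 1} =
      closure {A : Matrix n n ℂ | A.PosDef ∧ A.trace = 1} := by
  have hclosed : IsClosed {A : Matrix n n ℂ | A.PosSemidef ∧ A.trace = 1} := by
    have h1 : {A : Matrix n n ℂ | A.PosSemidef ∧ A.trace = 1} =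
        ({A : Matrix n n ℂ | Aᴴ = A} ∩ ⋂ x : n → ℂ,
          {A : Matrix n n ℂ | 0 ≤ star x ⬝ᵥ A *ᵥ x}) ∩ {A : Matrix n n ℂ | A.trace = 1} := by
      ext A
      simp only [Set.mem_setOf_eq, Set.mem_inter_iff, Set.mem_iInter, Set.mem_setOf_eq]
      exact and_congr_left fun _ => posSemidef_iff_dotProduct_mulVec
    rw [h1]
    refine IsClosed.inter (IsClosed.inter ?_ (isClosed_iInter fun x => ?_)) ?_
    · exact isClosed_eq continuous_id.matrix_conjTranspose continuous_id
    · have hcont : Continuous fun A : Matrix n n ℂ => star x ⬝ᵥ A *ᵥ x :=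
        continuous_const.dotProduct (continuous_id.matrix_mulVec continuous_const)
      have : {A : Matrix n n ℂ | 0 ≤ star x ⬝ᵥ A *ᵥ x} =
          (fun A : Matrix n n ℂ => star x ⬝ᵥ A *ᵥ x) ⁻¹'
            (Complex.re ⁻¹' Set.Ici 0 ∩ Complex.im ⁻¹' {0}) := by
        ext A
        simp [Complex.nonneg_iff, eq_comm]
      rw [this]
      exact ((isClosed_Ici.preimage Complex.continuous_re).inter
        (isClosed_singleton.preimage Complex.continuous_im)).preimage hcont
    · exact isClosed_eq (Matrix.traceLinearMap n ℂ ℂ).continuous_of_finiteDimensional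
        continuous_const
  refine ⟨hclosed, le_antisymm ?_ ?_⟩
  · -- PSD trace one matrices are in the closure
    rintro A ⟨hA, htr⟩
    set c : ℝ := (Fintype.card n : ℝ)
    have hc : 0 < c := by positivity
    have key : Tendsto (fun t : ℝ => (1 + t * c)⁻¹ • (A + t • (1 : Matrix n n ℂ)))
        (𝓝 0) (𝓝 A) := by
      have h1 : Tendsto (fun t : ℝ => (1 + t * c)⁻¹) (𝓝 0) (𝓝 1) := by
        have h0 : Tendsto (fun t : ℝ => 1 + t * c) (𝓝 0) (𝓝 1) := by
          have := Continuous.tendsto (show Continuous fun t : ℝ => 1 + t * c by fun_prop) 0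
          simpa using this
        simpa using h0.inv₀ one_ne_zero
      have h2 : Tendsto (fun t : ℝ => A + t • (1 : Matrix n n ℂ)) (𝓝 0) (𝓝 A) := by
        have := Continuous.tendsto
          (show Continuous fun t : ℝ => A + t • (1 : Matrix n n ℂ) by fun_prop) 0
        simpa using this
      simpa using h1.smul h2
    refine mem_closure_of_tendsto (b := 𝓝[>] (0:ℝ)) (key.mono_left nhdsWithin_le_nhds) ?_
    filter_upwards [self_mem_nhdsWithin] with t (ht : 0 < t)
    have hden : (0 : ℝ) < 1 + t * c := by positivity
    constructor
    · exact smul_posDef (inv_pos.mpr hden)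
        (Matrix.PosDef.posSemidef_add hA (smul_posDef ht Matrix.PosDef.one))
    · rw [trace_smul, trace_add, trace_smul, htr, trace_one]
      have : (t : ℂ) • (Fintype.card n : ℂ) = ((t * c : ℝ) : ℂ) := by
        push_cast [smul_eq_mul, c]; ring
      rw [show t • (Fintype.card n : ℂ) = ((t * c : ℝ) : ℂ) by
        rw [Complex.real_smul]; push_cast [c]; ring]
      rw [show (1 + t * c)⁻¹ • (1 + ((t * c : ℝ) : ℂ)) = (((1 + t * c)⁻¹ * (1 + t * c) : ℝ) : ℂ) by
        rw [Complex.real_smul]; push_cast; ring]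
      rw [inv_mul_cancel₀ hden.ne']
      norm_num
  · refine closure_minimal (fun A hA => ?_) hclosed
    exact ⟨hA.1.posSemidef, hA.2⟩
end

section
/- Let n be a finite nonempty index type. The map A ↦ (re (trace A))⁻¹ • A is a homeomorphism from the set {A : Matrix n n ℂ | A positive definite and det A = 1} onto the set {A : Matrix n n ℂ | A positive definite and trace A = 1}: it is a continuous bijection between these sets and its inverse is continuous. -/
open scoped ComplexOrder

lemma posDef_smul_real {n : Type*} [Fintype n] {A : Matrix n n ℂ} (hA : A.PosDef)
    {c : ℝ} (hc : 0 < c) : (c • A).PosDef := by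
  refine Matrix.posDef_iff_dotProduct_mulVec.mpr ⟨?_, ?_⟩
  · unfold Matrix.IsHermitian
    rw [Matrix.conjTranspose_smul, hA.1]
    congr 1
  · intro x hx
    have h := hA.dotProduct_mulVec_pos hx
    calc (0:ℂ) < c • (dotProduct (star x) (A.mulVec x)) := by
          rw [Complex.real_smul]
          exact mul_pos (Complex.zero_lt_real.mpr hc) h
      _ = dotProduct (star x) ((c • A).mulVec x) := by
          rw [Matrix.smul_mulVec, dotProduct_smul]

lemma posDef_trace_pos {n : Type*} [Fintype n] [DecidableEq n] [Nonempty n] {A : Matrix n n ℂ}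
    (hA : A.PosDef) : 0 < A.trace := by
  rw [Matrix.trace]
  apply Finset.sum_pos _ Finset.univ_nonempty
  intro i _
  have := hA.dotProduct_mulVec_pos (x := Pi.single i 1) (by intro h; simpa using congrFun h i)
  simpa [dotProduct, Pi.single_apply, Finset.sum_ite_eq] using this

/-- The map `A ↦ (re (trace A))⁻¹ • A` is a homeomorphism from the set of
positive definite complex matrices of determinant 1 onto the set of positive
definite matrices of trace 1. -/
theorem posDef_detOne_homeomorph_traceOne
    {n : Type*} [Fintype n] [DecidableEq n] [Nonempty n] :
    ∃ h : {A : Matrix n n ℂ // A.PosDef ∧ A.det = 1} ≃ₜ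
          {A : Matrix n n ℂ // A.PosDef ∧ A.trace = 1},
      ∀ A : {A : Matrix n n ℂ // A.PosDef ∧ A.det = 1},
        (h A : Matrix n n ℂ) = ((A : Matrix n n ℂ).trace.re)⁻¹ • (A : Matrix n n ℂ) := by
  set N := Fintype.card n with hN
  have hN0 : (N : ℝ) ≠ 0 := Nat.cast_ne_zero.mpr Fintype.card_pos.ne'
  -- facts
  have htr : ∀ {A : Matrix n n ℂ}, A.PosDef → (0 < A.trace.re ∧ (A.trace.re : ℂ) = A.trace) := by
    intro A hA
    have h := posDef_trace_pos hA
    rw [Complex.pos_iff] at h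
    exact ⟨h.1, Complex.ext (by simp) (by simp [h.2.symm])⟩
  have hdet : ∀ {A : Matrix n n ℂ}, A.PosDef → (0 < A.det.re ∧ (A.det.re : ℂ) = A.det) := by
    intro A hA
    have h := hA.det_pos
    rw [Complex.pos_iff] at h
    exact ⟨h.1, Complex.ext (by simp) (by simp [h.2.symm])⟩
  have hsmul : ∀ (c : ℝ) (A : Matrix n n ℂ), c • A = (c : ℂ) • A := by
    intro c A; ext i j; simp [Complex.real_smul]
  have hdsmul : ∀ (c : ℝ) (A : Matrix n n ℂ), (c • A).det = ((c ^ N * A.det.re : ℝ) : ℂ) →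
      True := fun _ _ _ => trivial
  -- inverse scaling factor
  set d : Matrix n n ℂ → ℝ := fun B => B.det.re ^ (-(1 / (N : ℝ))) with hd
  have hdpos : ∀ {B : Matrix n n ℂ}, B.PosDef → 0 < d B := fun hB =>
    Real.rpow_pos_of_pos (hdet hB).1 _
  have hdetsmul : ∀ (c : ℝ) (B : Matrix n n ℂ), (c • B).det = (c : ℂ) ^ N * B.det := by
    intro c B; rw [hsmul, Matrix.det_smul]
  -- the equiv
  refine ⟨{
    toFun := fun A => ⟨((A : Matrix n n ℂ).trace.re)⁻¹ • (A : Matrix n n ℂ), ?_, ?_⟩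
    invFun := fun B => ⟨d (B : Matrix n n ℂ) • (B : Matrix n n ℂ), ?_, ?_⟩
    left_inv := ?_
    right_inv := ?_
    continuous_toFun := ?_
    continuous_invFun := ?_ }, fun A => rfl⟩
  · exact posDef_smul_real A.2.1 (inv_pos.mpr (htr A.2.1).1)
  · rw [Matrix.trace_smul]
    obtain ⟨h1, h2⟩ := htr A.2.1
    rw [← h2]
    simp only [Complex.ofReal_re, Complex.real_smul]
    exact_mod_cast inv_mul_cancel₀ h1.ne'
  · exact posDef_smul_real B.2.1 (hdpos B.2.1)
  · obtain ⟨h1, h2⟩ := hdet B.2.1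
    have key : ((B : Matrix n n ℂ).det.re ^ (-(1/(N:ℝ)))) ^ N * (B : Matrix n n ℂ).det.re = 1 := by
      rw [← Real.rpow_natCast (_ ^ _), ← Real.rpow_mul h1.le, neg_mul, one_div,
        inv_mul_cancel₀ hN0, Real.rpow_neg_one, inv_mul_cancel₀ h1.ne']
    rw [hdetsmul, ← h2, ← Complex.ofReal_pow, ← Complex.ofReal_mul]
    simp only [hd]
    exact_mod_cast key
  · rintro ⟨A, hA, hAdet⟩
    apply Subtype.ext
    obtain ⟨h1, h2⟩ := htr hA
    simp only
    rw [smul_smul]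
    have : d ((A.trace.re)⁻¹ • A) = A.trace.re := by
      rw [hd]
      simp only
      rw [hdetsmul, hAdet, mul_one, ← Complex.ofReal_pow, Complex.ofReal_re,
        ← Real.rpow_natCast (_⁻¹) N, ← Real.rpow_mul (inv_pos.mpr h1).le]
      rw [show (N : ℝ) * (-(1/(N:ℝ))) = -1 by field_simp, Real.rpow_neg_one, inv_inv]
    rw [this, mul_inv_cancel₀ h1.ne', one_smul]
  · rintro ⟨B, hB, hBtr⟩
    apply Subtype.ext
    simp only
    have htrd : (d B • B).trace.re = d B := by
      rw [Matrix.trace_smul, hBtr]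
      simp
    rw [htrd, smul_smul, inv_mul_cancel₀ (hdpos hB).ne', one_smul]
  · apply Continuous.subtype_mk
    have h1 : Continuous fun A : {A : Matrix n n ℂ // A.PosDef ∧ A.det = 1} =>
        (A : Matrix n n ℂ).trace.re := Complex.continuous_re.comp continuous_subtype_val.matrix_trace
    exact (h1.inv₀ fun A => (htr A.2.1).1.ne').smul continuous_subtype_val
  · rw [continuous_iff_continuousAt]
    intro B
    rw [Topology.IsInducing.continuousAt_iff (⟨rfl⟩ : Topology.IsInducing
      (Subtype.val : {A : Matrix n n ℂ // A.PosDef ∧ A.det = 1} → Matrix n n ℂ))]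
    have hdetc : ContinuousAt (fun B : {A : Matrix n n ℂ // A.PosDef ∧ A.trace = 1} =>
        (B : Matrix n n ℂ).det.re) B :=
      (Complex.continuous_re.comp continuous_subtype_val.matrix_det).continuousAt
    have h1 : ContinuousAt (fun B : {A : Matrix n n ℂ // A.PosDef ∧ A.trace = 1} =>
        d (B : Matrix n n ℂ)) B := hdetc.rpow_const (Or.inl (hdet B.2.1).1.ne')
    exact h1.smul continuous_subtype_val.continuousAt
end

section
/- Let V be a finite-dimensional real normed vector space, E ⊆ V a compact convex set, and A ⊆ E a convex subset such that A is dense in E (i.e. E is contained in the closure of A) and A is open in its affine hull (i.e. A is an open subset of the affine span of A with its subspace topology). Then A equals the relative interior (intrinsic interior) of E. -/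
open Set Metric

/-- If `E` is a compact convex set in a finite-dimensional real normed space
and `A ⊆ E` is a convex subset which is dense in `E` and open in its affine
hull, then `A` is the relative (intrinsic) interior of `E`. -/
theorem dense_relatively_open_convex_eq_intrinsicInterior
    {V : Type*} [NormedAddCommGroup V] [NormedSpace ℝ V] [FiniteDimensional ℝ V]
    {E A : Set V} (hEcomp : IsCompact E) (hEconv : Convex ℝ E)
    (hAE : A ⊆ E) (hAconv : Convex ℝ A)
    (hdense : E ⊆ closure A)
    (hopen : IsOpen (Subtype.val ⁻¹' A : Set (affineSpan ℝ A))) :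
    A = intrinsicInterior ℝ E := by
  rcases A.eq_empty_or_nonempty with rfl | ⟨a, ha⟩
  · have hE : E = ∅ := eq_empty_of_subset_empty (by simpa using hdense)
    simp [hE]
  have hSclosed : IsClosed (affineSpan ℝ A : Set V) :=
    (affineSpan ℝ A).closed_of_finiteDimensional
  have hclE : E = closure A :=
    subset_antisymm hdense (closure_minimal hAE hEcomp.isClosed)
  have hclS : closure A ⊆ (affineSpan ℝ A : Set V) :=
    closure_minimal (subset_affineSpan ℝ A) hSclosed
  have hspan : affineSpan ℝ E = affineSpan ℝ A :=
    le_antisymm (affineSpan_le.2 (hclE ▸ hclS)) (affineSpan_mono ℝ hAE)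
  -- key : open segment from a point of A to a point of closure A lies in A
  have key : ∀ x ∈ A, ∀ z ∈ closure A, openSegment ℝ x z ⊆ A := by
    intro x hx z hz w hw
    obtain ⟨s, t, hs, ht, hst, rfl⟩ := hw
    obtain ⟨ε, hε, hball⟩ := Metric.isOpen_iff.1 hopen ⟨x, subset_affineSpan ℝ A hx⟩ hx
    obtain ⟨a', ha'A, ha'close⟩ := Metric.mem_closure_iff.1 hz (ε * s / t) (by positivity)
    set b := (t / s) • (z - a') + x with hb
    have hbS : b ∈ affineSpan ℝ A :=
      (affineSpan ℝ A).smul_vsub_vadd_mem (t / s) (hclS hz)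
        (subset_affineSpan ℝ A ha'A) (subset_affineSpan ℝ A hx)
    have hbA : b ∈ A := by
      have hmem : (⟨b, hbS⟩ : affineSpan ℝ A) ∈
          Metric.ball (⟨x, subset_affineSpan ℝ A hx⟩ : affineSpan ℝ A) ε := by
        rw [Metric.mem_ball, Subtype.dist_eq, dist_eq_norm]
        have : b - x = (t / s) • (z - a') := by rw [hb]; abel
        rw [this, norm_smul, Real.norm_eq_abs, abs_of_pos (by positivity)]
        calc t / s * ‖z - a'‖ < t / s * (ε * s / t) := by
              have := dist_eq_norm z a' ▸ ha'close
              exact mul_lt_mul_of_pos_left this (by positivity)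
          _ = ε := by field_simp
      exact Set.mem_preimage.1 (hball hmem)
    have hcombo : s • b + t • a' = s • x + t • z := by
      rw [hb, smul_add, smul_smul, mul_div_cancel₀ _ hs.ne']
      module
    exact hcombo ▸ hAconv hbA ha'A hs.le ht.le hst
  rw [intrinsicInterior, hspan]
  apply subset_antisymm
  · intro x hx
    exact ⟨⟨x, subset_affineSpan ℝ A hx⟩,
      interior_maximal (preimage_mono hAE) hopen hx, rfl⟩
  · rintro x ⟨⟨y, hyS⟩, hy, rfl⟩
    by_cases hya : y = a
    · exact hya ▸ ha
    obtain ⟨δ, hδ, hball⟩ := Metric.isOpen_iff.1 (isOpen_interior (s := (Subtype.val ⁻¹' E : Set (affineSpan ℝ A)))) ⟨y, hyS⟩ hy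
    have hna : (0:ℝ) < ‖y - a‖ := by
      rw [norm_pos_iff]; exact sub_ne_zero.2 hya
    set t := δ / (2 * ‖y - a‖) with htdef
    have ht : 0 < t := by positivity
    set z := y + t • (y - a) with hz
    have hzS : z ∈ affineSpan ℝ A := by
      have := (affineSpan ℝ A).smul_vsub_vadd_mem t hyS (subset_affineSpan ℝ A ha) hyS
      simpa [hz, add_comm] using this
    have hzE : z ∈ E := by
      have : (⟨z, hzS⟩ : affineSpan ℝ A) ∈ Metric.ball (⟨y, hyS⟩ : affineSpan ℝ A) δ := by
        rw [Metric.mem_ball, Subtype.dist_eq, dist_eq_norm]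
        have : z - y = t • (y - a) := by rw [hz]; abel
        rw [this, norm_smul, Real.norm_eq_abs, abs_of_pos ht, htdef]
        rw [div_mul_eq_mul_div, mul_comm]
        calc ‖y - a‖ * δ / (2 * ‖y - a‖) = δ / 2 := by field_simp
          _ < δ := by linarith
      have h2 : (⟨z, hzS⟩ : affineSpan ℝ A) ∈ (Subtype.val ⁻¹' E : Set (affineSpan ℝ A)) :=
        interior_subset (hball this)
      exact h2
    refine key a ha z (hclE ▸ hzE) ?_
    refine ⟨t / (1 + t), 1 / (1 + t), by positivity, by positivity, ?_, ?_⟩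
    · field_simp; ring
    · rw [hz]
      match_scalars <;> field_simp <;> ring
end
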